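/- Let 1 ≤ q ≤ ∞ and s ∈ ℝ. Suppose the weighted convolution estimate ‖⟨·⟩^s (F ∗ G)‖_{L^q(ℝⁿ)} ≤ C ‖⟨·⟩^s F‖_{L^q} ‖⟨·⟩^s G‖_{L^q} holds for all nonnegative F, G ∈ L^q with ⟨·⟩^s F, ⟨·⟩^s G ∈ L^q. Then the discrete analogue ℓ^q_s(ℤⁿ) ∗ ℓ^q_s(ℤⁿ) ↪ ℓ^q_s(ℤⁿ) holds: ‖a∗b‖_{ℓ^q_s} ≤ C′‖a‖_{ℓ^q_s}‖b‖_{ℓ^q_s} for all a, b ∈ ℓ^q_s(ℤⁿ). -/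

import Mathlib

open MeasureTheory
open scoped ENNReal NNReal
open Set

noncomputable section

/-- The Japanese bracket `⟨x⟩ = (1+‖x‖²)^{1/2}`. -/
def jb {n : ℕ} (x : EuclideanSpace ℝ (Fin n)) : ℝ := (1 + ‖x‖ ^ 2) ^ ((1:ℝ)/2)

/-- The Japanese bracket on `ℤⁿ`. -/
def jbZ {n : ℕ} (k : Fin n → ℤ) : ℝ := (1 + ∑ i, ((k i : ℝ)) ^ 2) ^ ((1:ℝ)/2)

/-- The weighted norm `‖a‖_{ℓ^q_s}` of a sequence on `ℤⁿ`. -/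
def lqsNorm {n : ℕ} (q : ℝ≥0∞) (s : ℝ) (a : (Fin n → ℤ) → ℂ) : ℝ≥0∞ :=
  eLpNorm (fun k => jbZ k ^ s * ‖a k‖) q Measure.count

namespace Transfer

variable {n : ℕ}

/-- rounding to the nearest lattice point -/
def rd {n : ℕ} (x : EuclideanSpace ℝ (Fin n)) : Fin n → ℤ := fun i => ⌊x i + 1/2⌋

lemma measurable_rd : Measurable (rd (n := n)) := by
  apply measurable_pi_lambda
  intro i
  have h1 : Measurable fun x : EuclideanSpace ℝ (Fin n) => x i :=
    (measurable_pi_apply i).comp (MeasurableEquiv.toLp 2 (Fin n → ℝ)).symm.measurable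
  exact Measurable.floor (h1.add measurable_const)

lemma rd_eq (x : EuclideanSpace ℝ (Fin n)) (k : Fin n → ℤ)
    (h : ∀ i, |x i - k i| ≤ 3/8) : rd x = k := by
  funext i
  have h1 := abs_le.1 (h i)
  rw [rd, Int.floor_eq_iff]
  constructor <;> [skip; push_cast] <;> [linarith [h1.1]; linarith [h1.2]]

lemma abs_sub_rd (x : EuclideanSpace ℝ (Fin n)) (i : Fin n) : |x i - rd x i| ≤ 1/2 := by
  have h1 : (⌊x i + 1/2⌋ : ℝ) ≤ x i + 1/2 := Int.floor_le _
  have h2 : x i + 1/2 - 1 < ⌊x i + 1/2⌋ := Int.sub_one_lt_floor _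
  rw [abs_le]; constructor <;> [simp only [rd]; simp only [rd]] <;> push_cast <;> linarith

lemma jb_eq_sqrt {x : EuclideanSpace ℝ (Fin n)} : jb x = Real.sqrt (1 + ‖x‖ ^ 2) := by
  rw [jb, Real.sqrt_eq_rpow]

lemma jbZ_eq_sqrt {k : Fin n → ℤ} : jbZ k = Real.sqrt (1 + ∑ i, ((k i : ℝ)) ^ 2) := by
  rw [jbZ, Real.sqrt_eq_rpow]

lemma jb_pos (x : EuclideanSpace ℝ (Fin n)) : 0 < jb x := by
  rw [jb_eq_sqrt]
  apply Real.sqrt_pos.2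
  positivity

lemma jbZ_pos (k : Fin n → ℤ) : 0 < jbZ k := by
  rw [jbZ_eq_sqrt]
  apply Real.sqrt_pos.2
  positivity

lemma norm_sq_eq (x : EuclideanSpace ℝ (Fin n)) : ‖x‖ ^ 2 = ∑ i, (x i) ^ 2 := by
  rw [EuclideanSpace.norm_eq, Real.sq_sqrt (by positivity)]
  simp [Real.norm_eq_abs, sq_abs]

/-- two-sided comparison of brackets -/
lemma jb_comp (x : EuclideanSpace ℝ (Fin n)) :
    jb x ≤ ((n : ℝ) + 2) * jbZ (rd x) ∧ jbZ (rd x) ≤ ((n : ℝ) + 2) * jb x := by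
  have hsq : ∀ i, (x i - rd x i)^2 ≤ 1/4 := by
    intro i
    have h := abs_le.1 (abs_sub_rd x i)
    nlinarith [h.1, h.2]
  have hxk : ∀ i, (x i)^2 ≤ 2 * ((rd x i : ℝ))^2 + 1/2 := by
    intro i
    nlinarith [hsq i, sq_nonneg (x i - 2*((rd x i : ℝ)))]
  have hkx : ∀ i, ((rd x i : ℝ))^2 ≤ 2 * (x i)^2 + 1/2 := by
    intro i
    nlinarith [hsq i, sq_nonneg (2 * x i - ((rd x i : ℝ)))]
  have hsum1 : ∑ i, (x i)^2 ≤ ∑ i, (2 * ((rd x i : ℝ))^2 + 1/2) := Finset.sum_le_sum fun i _ => hxk i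
  have hsum2 : ∑ i, ((rd x i : ℝ))^2 ≤ ∑ i, (2 * (x i)^2 + 1/2) := Finset.sum_le_sum fun i _ => hkx i
  have hc : ∑ i : Fin n, ((1:ℝ)/2) = n/2 := by simp; ring
  have hS1 : ∑ i, (2 * ((rd x i : ℝ))^2 + 1/2) = 2 * (∑ i, ((rd x i : ℝ))^2) + n/2 := by
    rw [Finset.sum_add_distrib, ← Finset.mul_sum, hc]
  have hS2 : ∑ i, (2 * (x i)^2 + 1/2) = 2 * (∑ i, (x i)^2) + n/2 := by
    rw [Finset.sum_add_distrib, ← Finset.mul_sum, hc]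
  have hkn : (0:ℝ) ≤ ∑ i, ((rd x i : ℝ))^2 := by positivity
  have hxn : (0:ℝ) ≤ ∑ i, (x i)^2 := by positivity
  have hn : (0:ℝ) ≤ n := Nat.cast_nonneg n
  constructor
  · rw [jb_eq_sqrt, jbZ_eq_sqrt, norm_sq_eq]
    calc Real.sqrt (1 + ∑ i, (x i)^2)
        ≤ Real.sqrt (((n:ℝ)+2)^2 * (1 + ∑ i, ((rd x i : ℝ))^2)) := by
          apply Real.sqrt_le_sqrt; nlinarith [mul_nonneg hn hkn, mul_nonneg (mul_nonneg hn hn) hkn]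
      _ = ((n:ℝ)+2) * Real.sqrt (1 + ∑ i, ((rd x i : ℝ))^2) := by
          rw [Real.sqrt_mul (by positivity), Real.sqrt_sq (by positivity)]
  · rw [jb_eq_sqrt, jbZ_eq_sqrt, norm_sq_eq]
    calc Real.sqrt (1 + ∑ i, ((rd x i : ℝ))^2)
        ≤ Real.sqrt (((n:ℝ)+2)^2 * (1 + ∑ i, (x i)^2)) := by
          apply Real.sqrt_le_sqrt; nlinarith [mul_nonneg hn hxn, mul_nonneg (mul_nonneg hn hn) hxn]
      _ = ((n:ℝ)+2) * Real.sqrt (1 + ∑ i, (x i)^2) := by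
          rw [Real.sqrt_mul (by positivity), Real.sqrt_sq (by positivity)]

/-- comparison of powers -/
lemma rpow_comp {A u w : ℝ} (hA : 1 ≤ A) (hu : 0 < u) (hw : 0 < w)
    (h1 : u ≤ A * w) (h2 : w ≤ A * u) (s : ℝ) : u ^ s ≤ A ^ |s| * w ^ s := by
  rcases le_total 0 s with hs | hs
  · calc u ^ s ≤ (A * w) ^ s := Real.rpow_le_rpow hu.le h1 hs
      _ = A ^ s * w ^ s := Real.mul_rpow (by linarith) hw.le
      _ ≤ A ^ |s| * w ^ s := by
          apply mul_le_mul_of_nonneg_right _ (Real.rpow_nonneg hw.le s)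
          exact Real.rpow_le_rpow_of_exponent_le hA (le_abs_self s)
  · have hA0 : (0:ℝ) < A := by linarith
    have hdiv : w / A ≤ u := (div_le_iff₀' hA0).2 h2
    calc u ^ s ≤ (w / A) ^ s := Real.rpow_le_rpow_of_nonpos (by positivity) hdiv hs
      _ = w ^ s / A ^ s := Real.div_rpow hw.le hA0.le s
      _ = A ^ (-s) * w ^ s := by
          rw [Real.rpow_neg hA0.le]
          field_simp
      _ = A ^ |s| * w ^ s := by rw [abs_of_nonpos hs]

def Qs {n : ℕ} (k : Fin n → ℤ) : Set (EuclideanSpace ℝ (Fin n)) :=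
  (MeasurableEquiv.toLp 2 (Fin n → ℝ)).symm ⁻¹' (univ.pi fun i => Icc ((k i:ℝ) - 1/4) ((k i:ℝ) + 1/4))

def Uset (n : ℕ) : Set (EuclideanSpace ℝ (Fin n)) := ⋃ k, Qs k

lemma equiv_apply (x : EuclideanSpace ℝ (Fin n)) (i : Fin n) :
    (MeasurableEquiv.toLp 2 (Fin n → ℝ)).symm x i = x i := rfl

lemma measurableSet_Qs (k : Fin n → ℤ) : MeasurableSet (Qs k) :=
  (MeasurableEquiv.toLp 2 (Fin n → ℝ)).symm.measurable
    (MeasurableSet.univ_pi fun _ => measurableSet_Icc)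

lemma measurableSet_U : MeasurableSet (Uset n) :=
  MeasurableSet.iUnion fun k => measurableSet_Qs k

lemma mem_Qs_iff {x : EuclideanSpace ℝ (Fin n)} {k : Fin n → ℤ} :
    x ∈ Qs k ↔ ∀ i, |x i - k i| ≤ 1/4 := by
  simp only [Qs, mem_preimage, mem_pi, mem_univ, forall_true_left, mem_Icc, equiv_apply]
  constructor
  · intro h i; rw [abs_le]; constructor <;> linarith [(h i).1, (h i).2]
  · intro h i; have := abs_le.1 (h i); constructor <;> linarith [this.1, this.2]

lemma rd_eq_of_mem_Qs {x : EuclideanSpace ℝ (Fin n)} {k : Fin n → ℤ} (h : x ∈ Qs k) :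
    rd x = k := by
  apply rd_eq
  intro i
  have := mem_Qs_iff.1 h i
  calc |x i - k i| ≤ 1/4 := this
    _ ≤ 3/8 := by norm_num

lemma volume_pi_preimage (g : Fin n → Set ℝ) (hg : ∀ i, MeasurableSet (g i)) :
    volume ((MeasurableEquiv.toLp 2 (Fin n → ℝ)).symm ⁻¹' (univ.pi g)) = ∏ i, volume (g i) := by
  rw [(EuclideanSpace.volume_preserving_symm_measurableEquiv_toLp (Fin n)).measure_preimage
    (MeasurableSet.univ_pi hg).nullMeasurableSet]
  exact volume_pi_pi g

lemma volume_Qs (k : Fin n → ℤ) : volume (Qs k) = (2:ℝ≥0∞)⁻¹ ^ n := by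
  rw [Qs, volume_pi_preimage _ fun i => measurableSet_Icc]
  have : ∀ i : Fin n, volume (Icc ((k i:ℝ) - 1/4) ((k i:ℝ) + 1/4)) = (2:ℝ≥0∞)⁻¹ := by
    intro i
    rw [Real.volume_Icc]
    rw [show (k i:ℝ) + 1/4 - ((k i:ℝ) - 1/4) = 1/2 by ring]
    rw [show (1:ℝ)/2 = (2:ℝ)⁻¹ by norm_num, ENNReal.ofReal_inv_of_pos (by norm_num)]
    norm_num
  rw [Finset.prod_congr rfl fun i _ => this i, Finset.prod_const, Finset.card_univ,
    Fintype.card_fin]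

lemma mem_Qc_iff {x : EuclideanSpace ℝ (Fin n)} {k : Fin n → ℤ} :
    rd x = k ↔ ∀ i, (k i:ℝ) - 1/2 ≤ x i ∧ x i < (k i:ℝ) + 1/2 := by
  rw [funext_iff]
  constructor
  · intro h i
    have h' := h i
    simp only [rd] at h'
    have h1 : ((k i : ℤ) : ℝ) ≤ x i + 1/2 := h' ▸ Int.floor_le (x i + 1/2)
    have h2 : x i + 1/2 - 1 < ((k i : ℤ) : ℝ) := h' ▸ Int.sub_one_lt_floor (x i + 1/2)
    constructor <;> linarith
  · intro h i
    simp only [rd]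
    rw [Int.floor_eq_iff]
    push_cast
    constructor <;> linarith [(h i).1, (h i).2]

lemma volume_rd_preimage (k : Fin n → ℤ) : volume (rd ⁻¹' {k}) = 1 := by
  have : rd ⁻¹' {k} = (MeasurableEquiv.toLp 2 (Fin n → ℝ)).symm ⁻¹'
      (univ.pi fun i => Ico ((k i:ℝ) - 1/2) ((k i:ℝ) + 1/2)) := by
    ext x
    simp only [mem_preimage, mem_singleton_iff, mem_pi, mem_univ, forall_true_left, mem_Ico,
      equiv_apply]
    rw [mem_Qc_iff]
  rw [this, volume_pi_preimage _ fun i => measurableSet_Ico]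
  have : ∀ i : Fin n, volume (Ico ((k i:ℝ) - 1/2) ((k i:ℝ) + 1/2)) = 1 := by
    intro i
    rw [Real.volume_Ico, show (k i:ℝ) + 1/2 - ((k i:ℝ) - 1/2) = 1 by ring, ENNReal.ofReal_one]
  rw [Finset.prod_congr rfl fun i _ => this i, Finset.prod_const, one_pow]

lemma map_rd_volume : Measure.map rd (volume : Measure (EuclideanSpace ℝ (Fin n)))
    = Measure.count := by
  apply Measure.ext_of_singleton
  intro k
  rw [Measure.map_apply measurable_rd (measurableSet_singleton k), Measure.count_singleton,
    volume_rd_preimage]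

lemma Qs_inter (k : Fin n → ℤ) : rd ⁻¹' {k} ∩ Uset n = Qs k := by
  apply Subset.antisymm
  · rintro x ⟨hx1, hx2⟩
    simp only [mem_preimage, mem_singleton_iff] at hx1
    obtain ⟨_, ⟨k', rfl⟩, hk'⟩ := hx2
    have := rd_eq_of_mem_Qs hk'
    rw [← hx1, this]
    exact hk'
  · intro x hx
    refine ⟨?_, mem_iUnion.2 ⟨k, hx⟩⟩
    simp only [mem_preimage, mem_singleton_iff]
    exact rd_eq_of_mem_Qs hx

lemma map_rd_restrict : Measure.map rd ((volume : Measure (EuclideanSpace ℝ (Fin n))).restrict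
    (Uset n)) = ((2:ℝ≥0∞)⁻¹ ^ n) • Measure.count := by
  apply Measure.ext_of_singleton
  intro k
  rw [Measure.map_apply measurable_rd (measurableSet_singleton k),
    Measure.restrict_apply (measurable_rd (measurableSet_singleton k)),
    Qs_inter, volume_Qs]
  simp [Measure.count_singleton]

variable {q : ℝ≥0∞}

lemma norm_smul_norm (c : ℝ≥0) (t : ℝ) : ‖(c:ℝ) * ‖t‖‖ = (c:ℝ) * ‖t‖ := by
  rw [Real.norm_of_nonneg (by positivity)]

/-- transfer upper bound: continuous norm dominated by the discrete norm -/
lemma eLpNorm_le_count {g : (Fin n → ℤ) → ℝ} {h : EuclideanSpace ℝ (Fin n) → ℝ} {c : ℝ≥0}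
    (hpt : ∀ x, ‖h x‖ ≤ (c:ℝ) * ‖g (rd x)‖) :
    eLpNorm h q volume ≤ c * eLpNorm g q Measure.count := by
  have hg : Measurable g := measurable_of_countable g
  calc eLpNorm h q volume ≤ eLpNorm (fun x => (c:ℝ) * ‖g (rd x)‖) q volume := by
        apply eLpNorm_mono
        intro x
        rw [norm_smul_norm]
        exact hpt x
    _ = eLpNorm ((c:ℝ) • (fun x => ‖g (rd x)‖)) q volume := rfl
    _ = ‖(c:ℝ)‖₊ • eLpNorm (fun x => ‖g (rd x)‖) q volume := eLpNorm_const_smul _ _ _ _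
    _ = c * eLpNorm (g ∘ rd) q volume := by
        rw [show (fun x => ‖g (rd x)‖) = fun x => ‖(g ∘ rd) x‖ from rfl, eLpNorm_norm (g ∘ rd)]
        simp [ENNReal.smul_def]
    _ = c * eLpNorm g q (Measure.map rd volume) := by
        rw [eLpNorm_map_measure (hg.aestronglyMeasurable) measurable_rd.aemeasurable]
    _ = c * eLpNorm g q Measure.count := by rw [map_rd_volume]

/-- transfer lower bound: discrete norm dominated by the continuous norm -/
lemma count_le_eLpNorm (hq : 1 ≤ q) {g : (Fin n → ℤ) → ℝ} {h : EuclideanSpace ℝ (Fin n) → ℝ}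
    {c : ℝ≥0} (hpt : ∀ x ∈ Uset n, ‖g (rd x)‖ ≤ (c:ℝ) * ‖h x‖) :
    eLpNorm g q Measure.count ≤ (2:ℝ≥0∞)^n * c * eLpNorm h q volume := by
  have hg : Measurable g := measurable_of_countable g
  have hcount : (Measure.count : Measure (Fin n → ℤ))
      = (2:ℝ≥0∞)^n • (((2:ℝ≥0∞)⁻¹ ^ n) • Measure.count) := by
    rw [smul_smul, ← mul_pow, ENNReal.mul_inv_cancel (by norm_num) (by norm_num), one_pow,
      one_smul]
  have hexp : ((2:ℝ≥0∞)^n) ^ (1/q).toReal ≤ (2:ℝ≥0∞)^n := by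
    have h1q : (1/q) ≤ 1 := by
      rw [one_div]
      exact ENNReal.inv_le_one.mpr hq
    have := ENNReal.toReal_mono (by simp) h1q
    simp only [ENNReal.toReal_one] at this
    have hbase : (1:ℝ≥0∞) ≤ (2:ℝ≥0∞)^n := one_le_pow₀ one_le_two
    calc ((2:ℝ≥0∞)^n) ^ (1/q).toReal ≤ ((2:ℝ≥0∞)^n) ^ (1:ℝ) :=
          ENNReal.rpow_le_rpow_of_exponent_le hbase this
      _ = (2:ℝ≥0∞)^n := ENNReal.rpow_one _
  calc eLpNorm g q Measure.count
      = eLpNorm g q ((2:ℝ≥0∞)^n • (((2:ℝ≥0∞)⁻¹ ^ n) • Measure.count)) := by rw [← hcount]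
    _ = ((2:ℝ≥0∞)^n) ^ (1/q).toReal • eLpNorm g q (((2:ℝ≥0∞)⁻¹ ^ n) • Measure.count) :=
        eLpNorm_smul_measure_of_ne_zero (by positivity) _ _ _
    _ ≤ (2:ℝ≥0∞)^n * eLpNorm g q (((2:ℝ≥0∞)⁻¹ ^ n) • Measure.count) := by
        rw [smul_eq_mul]
        exact mul_le_mul_left hexp _
    _ = (2:ℝ≥0∞)^n * eLpNorm (g ∘ rd) q (volume.restrict (Uset n)) := by
        rw [← map_rd_restrict,
          eLpNorm_map_measure hg.aestronglyMeasurable measurable_rd.aemeasurable]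
    _ ≤ (2:ℝ≥0∞)^n * eLpNorm (fun x => (c:ℝ) * ‖h x‖) q (volume.restrict (Uset n)) := by
        apply mul_le_mul_right
        apply eLpNorm_mono_ae
        rw [ae_restrict_iff' measurableSet_U]
        filter_upwards with x hx
        rw [norm_smul_norm]
        exact hpt x hx
    _ = (2:ℝ≥0∞)^n * (c * eLpNorm h q (volume.restrict (Uset n))) := by
        rw [show (fun x => (c:ℝ) * ‖h x‖) = (c:ℝ) • (fun x => ‖h x‖) from rfl,
          eLpNorm_const_smul, eLpNorm_norm]
        simp [ENNReal.smul_def]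
    _ ≤ (2:ℝ≥0∞)^n * c * eLpNorm h q volume := by
        rw [mul_assoc]
        exact mul_le_mul_right (mul_le_mul_right (eLpNorm_mono_measure _ Measure.restrict_le_self) _) _

lemma memLp_of_bounded_support {f : EuclideanSpace ℝ (Fin n) → ℝ} (hf : Measurable f)
    {S : Set (EuclideanSpace ℝ (Fin n))} (hS : MeasurableSet S) (hSvol : volume S ≠ ∞)
    {M : ℝ} (hb : ∀ x, ‖f x‖ ≤ S.indicator (fun _ => M) x) : MemLp f q volume := by
  apply MemLp.of_le (memLp_indicator_const q hS M (Or.inr hSvol)) hf.aestronglyMeasurable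
  filter_upwards with x
  exact (hb x).trans ((Real.norm_eq_abs _).symm ▸ le_abs_self _)

lemma exists_bound (A : Finset (Fin n → ℤ)) (u : (Fin n → ℤ) → ℝ)
    (hsupp : ∀ k ∉ A, u k = 0) : ∃ M : ℝ, 0 ≤ M ∧ ∀ k, u k ≤ M := by
  obtain ⟨M, hM⟩ := (A.finite_toSet.image u).bddAbove
  refine ⟨max M 0, le_max_right _ _, fun k => ?_⟩
  by_cases hk : k ∈ A
  · exact le_max_of_le_left (hM (Set.mem_image_of_mem u hk))
  · rw [hsupp k hk]; exact le_max_right _ _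

lemma volume_box (c : Fin n → ℝ) :
    volume ((MeasurableEquiv.toLp 2 (Fin n → ℝ)).symm ⁻¹'
      (univ.pi fun i => Icc (c i - 1/4) (c i + 1/4))) = (2:ℝ≥0∞)⁻¹ ^ n := by
  rw [volume_pi_preimage _ fun i => measurableSet_Icc]
  have : ∀ i : Fin n, volume (Icc (c i - 1/4) (c i + 1/4)) = (2:ℝ≥0∞)⁻¹ := by
    intro i
    rw [Real.volume_Icc, show c i + 1/4 - (c i - 1/4) = 1/2 by ring,
      show (1:ℝ)/2 = (2:ℝ)⁻¹ by norm_num, ENNReal.ofReal_inv_of_pos (by norm_num)]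
    norm_num
  rw [Finset.prod_congr rfl fun i _ => this i, Finset.prod_const, Finset.card_univ,
    Fintype.card_fin]

lemma vol_rd_preimage_finset (A : Finset (Fin n → ℤ)) :
    volume (rd ⁻¹' (A : Set (Fin n → ℤ))) = A.card := by
  rw [← Measure.map_apply measurable_rd (A.countable_toSet.measurableSet), map_rd_volume,
    Measure.count_apply_finset]

/-- The key convolution lower bound. -/
lemma conv_lower (A : Finset (Fin n → ℤ)) (u v : (Fin n → ℤ) → ℝ)
    (hu : ∀ k, 0 ≤ u k) (hv : ∀ k, 0 ≤ v k)
    (hsu : ∀ k ∉ A, u k = 0) (hsv : ∀ k ∉ A, v k = 0)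
    {x : EuclideanSpace ℝ (Fin n)} {k : Fin n → ℤ} (hx : x ∈ Qs k) :
    (∑ ℓ ∈ A, u ℓ * v (k - ℓ)) * ((2:ℝ)⁻¹)^n ≤ ∫ y, u (rd y) * v (rd (x - y)) := by
  classical
  obtain ⟨Mu, hMu0, hMu⟩ := exists_bound A u hsu
  obtain ⟨Mv, hMv0, hMv⟩ := exists_bound A v hsv
  set FG : EuclideanSpace ℝ (Fin n) → ℝ := fun y => u (rd y) * v (rd (x - y)) with hFG
  have hmeas : Measurable FG := by
    apply Measurable.mul
    · exact (measurable_of_countable u).comp measurable_rd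
    · exact (measurable_of_countable v).comp
        (measurable_rd.comp (measurable_const.sub measurable_id))
  have hnn : ∀ y, 0 ≤ FG y := fun y => mul_nonneg (hu _) (hv _)
  have ht : ∀ i, |x i - k i| ≤ 1/4 := mem_Qs_iff.1 hx
  -- the boxes
  set box : (Fin n → ℤ) → Set (EuclideanSpace ℝ (Fin n)) := fun ℓ =>
    (MeasurableEquiv.toLp 2 (Fin n → ℝ)).symm ⁻¹'
      (univ.pi fun i => Icc ((ℓ i:ℝ) + (x i - k i)/2 - 1/4) ((ℓ i:ℝ) + (x i - k i)/2 + 1/4))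
    with hbox
  have hboxm : ∀ ℓ, MeasurableSet (box ℓ) := fun ℓ =>
    (MeasurableEquiv.toLp 2 (Fin n → ℝ)).symm.measurable
      (MeasurableSet.univ_pi fun _ => measurableSet_Icc)
  have hboxvol : ∀ ℓ, volume (box ℓ) = (2:ℝ≥0∞)⁻¹ ^ n := fun ℓ =>
    volume_box (fun i => (ℓ i:ℝ) + (x i - k i)/2)
  have hmem : ∀ ℓ (y : EuclideanSpace ℝ (Fin n)), y ∈ box ℓ →
      ∀ i, |y i - (((ℓ i):ℝ) + (x i - k i)/2)| ≤ 1/4 := by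
    intro ℓ y hy i
    have := hy i (mem_univ i)
    rw [equiv_apply] at this
    rw [abs_le]
    constructor <;> [linarith [this.1]; linarith [this.2]]
  have hrd1 : ∀ ℓ y, y ∈ box ℓ → rd y = ℓ := by
    intro ℓ y hy
    apply rd_eq
    intro i
    have h1 := abs_le.1 (hmem ℓ y hy i)
    have h2 := abs_le.1 (ht i)
    rw [abs_le]
    constructor <;> linarith [h1.1, h1.2, h2.1, h2.2]
  have hrd2 : ∀ ℓ y, y ∈ box ℓ → rd (x - y) = k - ℓ := by
    intro ℓ y hy
    apply rd_eq
    intro i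
    have h1 := abs_le.1 (hmem ℓ y hy i)
    have h2 := abs_le.1 (ht i)
    have hxy : (x - y) i = x i - y i := rfl
    have hkl : ((k - ℓ) i : ℝ) = (k i : ℝ) - (ℓ i : ℝ) := by
      rw [Pi.sub_apply]; push_cast; ring
    rw [hxy, hkl, abs_le]
    constructor <;> linarith [h1.1, h1.2, h2.1, h2.2]
  have hdisj : Set.PairwiseDisjoint (A : Set (Fin n → ℤ)) box := by
    intro ℓ _ ℓ' _ hne
    rw [Function.onFun, Set.disjoint_left]
    intro y hy hy'
    exact hne ((hrd1 ℓ y hy).symm.trans (hrd1 ℓ' y hy'))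
  -- rewrite the integral via lintegral
  rw [integral_eq_lintegral_of_nonneg_ae (Filter.Eventually.of_forall hnn)
    hmeas.aestronglyMeasurable]
  set L : ℝ≥0∞ := ∫⁻ y, ENNReal.ofReal (FG y) with hL
  have hLtop : L ≠ ⊤ := by
    have hb : ∀ y, ENNReal.ofReal (FG y) ≤
        (rd ⁻¹' (A : Set (Fin n → ℤ))).indicator (fun _ => ENNReal.ofReal (Mu * Mv)) y := by
      intro y
      by_cases hy : rd y ∈ A
      · have hy' : y ∈ rd ⁻¹' (A : Set (Fin n → ℤ)) := hy
        rw [Set.indicator_of_mem hy']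
        exact ENNReal.ofReal_le_ofReal
          (mul_le_mul (hMu _) (hMv _) (hv _) hMu0)
      · have hy' : y ∉ rd ⁻¹' (A : Set (Fin n → ℤ)) := hy
        rw [Set.indicator_of_notMem hy', hFG]
        simp [hsu _ hy]
    have hble : L ≤ ENNReal.ofReal (Mu * Mv) * A.card := by
      calc L ≤ ∫⁻ y, (rd ⁻¹' (A : Set (Fin n → ℤ))).indicator
            (fun _ => ENNReal.ofReal (Mu * Mv)) y := lintegral_mono hb
        _ = ENNReal.ofReal (Mu * Mv) * volume (rd ⁻¹' (A : Set (Fin n → ℤ))) := by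
            rw [lintegral_indicator (measurable_rd (A.countable_toSet.measurableSet)),
              setLIntegral_const]
        _ = ENNReal.ofReal (Mu * Mv) * A.card := by rw [vol_rd_preimage_finset]
    exact ne_top_of_le_ne_top
      (ENNReal.mul_ne_top ENNReal.ofReal_ne_top (ENNReal.natCast_ne_top _)) hble
  have hkey : ∀ ℓ ∈ A, ∫⁻ y in box ℓ, ENNReal.ofReal (FG y)
      = ENNReal.ofReal (u ℓ * v (k - ℓ)) * (2:ℝ≥0∞)⁻¹ ^ n := by
    intro ℓ _
    have hcg : ∫⁻ y in box ℓ, ENNReal.ofReal (FG y)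
        = ∫⁻ _ in box ℓ, ENNReal.ofReal (u ℓ * v (k - ℓ)) := by
      apply setLIntegral_congr_fun_ae (hboxm ℓ) (Filter.Eventually.of_forall ?_)
      intro y hy
      rw [hFG]
      simp only
      rw [hrd1 ℓ y hy, hrd2 ℓ y hy]
    rw [hcg, setLIntegral_const, hboxvol]
  have hlow : ENNReal.ofReal ((∑ ℓ ∈ A, u ℓ * v (k - ℓ))) * (2:ℝ≥0∞)⁻¹ ^ n ≤ L := by
    calc ENNReal.ofReal ((∑ ℓ ∈ A, u ℓ * v (k - ℓ))) * (2:ℝ≥0∞)⁻¹ ^ n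
        = ∑ ℓ ∈ A, ENNReal.ofReal (u ℓ * v (k - ℓ)) * (2:ℝ≥0∞)⁻¹ ^ n := by
          rw [ENNReal.ofReal_sum_of_nonneg (fun ℓ _ => mul_nonneg (hu _) (hv _)),
            Finset.sum_mul]
      _ = ∫⁻ y in ⋃ ℓ ∈ A, box ℓ, ENNReal.ofReal (FG y) := by
          rw [lintegral_biUnion_finset hdisj (fun ℓ _ => hboxm ℓ)]
          exact (Finset.sum_congr rfl hkey).symm
      _ ≤ L := setLIntegral_le_lintegral _ _
  have h2n : ((2:ℝ≥0∞)⁻¹ ^ n).toReal = ((2:ℝ)⁻¹)^n := by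
    simp [ENNReal.toReal_pow, ENNReal.toReal_inv]
  calc (∑ ℓ ∈ A, u ℓ * v (k - ℓ)) * ((2:ℝ)⁻¹)^n
      = (ENNReal.ofReal ((∑ ℓ ∈ A, u ℓ * v (k - ℓ))) * (2:ℝ≥0∞)⁻¹ ^ n).toReal := by
        rw [ENNReal.toReal_mul, ENNReal.toReal_ofReal
          (Finset.sum_nonneg fun ℓ _ => mul_nonneg (hu _) (hv _)), h2n]
    _ ≤ L.toReal := ENNReal.toReal_mono hLtop hlow

variable {s : ℝ}

/-- the comparison constant -/
def Bc (n : ℕ) (s : ℝ) : ℝ≥0 := Real.toNNReal (((n:ℝ)+2) ^ |s|)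

lemma Bc_coe : ((Bc n s : ℝ≥0) : ℝ) = ((n:ℝ)+2) ^ |s| :=
  Real.coe_toNNReal _ (Real.rpow_nonneg (by positivity) _)

lemma one_le_Bc : 1 ≤ ((Bc n s : ℝ≥0) : ℝ) := by
  rw [Bc_coe]
  calc (1:ℝ) = (1:ℝ) ^ |s| := (Real.one_rpow _).symm
    _ ≤ ((n:ℝ)+2) ^ |s| := Real.rpow_le_rpow (by norm_num)
      (by have := Nat.cast_nonneg (α := ℝ) n; linarith) (abs_nonneg s)

lemma jb_rpow_le (x : EuclideanSpace ℝ (Fin n)) :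
    jb x ^ s ≤ (Bc n s : ℝ) * jbZ (rd x) ^ s := by
  rw [Bc_coe]
  have hA : (1:ℝ) ≤ (n:ℝ)+2 := by
    have := Nat.cast_nonneg (α := ℝ) n; linarith
  exact rpow_comp hA (jb_pos x) (jbZ_pos (rd x)) (jb_comp x).1 (jb_comp x).2 s

lemma jbZ_rpow_le (x : EuclideanSpace ℝ (Fin n)) :
    jbZ (rd x) ^ s ≤ (Bc n s : ℝ) * jb x ^ s := by
  rw [Bc_coe]
  have hA : (1:ℝ) ≤ (n:ℝ)+2 := by
    have := Nat.cast_nonneg (α := ℝ) n; linarith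
  exact rpow_comp hA (jbZ_pos (rd x)) (jb_pos x) (jb_comp x).2 (jb_comp x).1 s

/-- The core finite-support transference estimate. -/
lemma core (hq : 1 ≤ q) (C : ℝ≥0)
    (hC : ∀ F G : EuclideanSpace ℝ (Fin n) → ℝ,
      Measurable F → Measurable G → (∀ x, 0 ≤ F x) → (∀ x, 0 ≤ G x) →
      MemLp F q volume → MemLp (fun x => jb x ^ s * F x) q volume →
      MemLp G q volume → MemLp (fun x => jb x ^ s * G x) q volume →
      eLpNorm (fun x => jb x ^ s * ∫ y, F y * G (x - y)) q volume ≤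
        C * eLpNorm (fun x => jb x ^ s * F x) q volume *
          eLpNorm (fun x => jb x ^ s * G x) q volume)
    (A : Finset (Fin n → ℤ)) (u v : (Fin n → ℤ) → ℝ)
    (hu : ∀ k, 0 ≤ u k) (hv : ∀ k, 0 ≤ v k)
    (hsu : ∀ k ∉ A, u k = 0) (hsv : ∀ k ∉ A, v k = 0) :
    eLpNorm (fun k => jbZ k ^ s * (∑ ℓ ∈ A, u ℓ * v (k - ℓ))) q Measure.count ≤
      ((2:ℝ≥0∞)^n * (2:ℝ≥0∞)^n * (Bc n s) * (Bc n s) * (Bc n s) * C) *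
        eLpNorm (fun k => jbZ k ^ s * u k) q Measure.count *
        eLpNorm (fun k => jbZ k ^ s * v k) q Measure.count := by
  classical
  set F : EuclideanSpace ℝ (Fin n) → ℝ := fun x => u (rd x) with hF
  set G : EuclideanSpace ℝ (Fin n) → ℝ := fun x => v (rd x) with hG
  have hFmeas : Measurable F := (measurable_of_countable u).comp measurable_rd
  have hGmeas : Measurable G := (measurable_of_countable v).comp measurable_rd
  have hFnn : ∀ x, 0 ≤ F x := fun x => hu _
  have hGnn : ∀ x, 0 ≤ G x := fun x => hv _
  have hSmeas : MeasurableSet (rd ⁻¹' (A : Set (Fin n → ℤ))) :=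
    measurable_rd (A.countable_toSet.measurableSet)
  have hSvol : volume (rd ⁻¹' (A : Set (Fin n → ℤ))) ≠ ⊤ := by
    rw [vol_rd_preimage_finset]
    exact ENNReal.natCast_ne_top _
  -- boundedness producing MemLp
  have memaux : ∀ w : (Fin n → ℤ) → ℝ, (∀ k, 0 ≤ w k) → (∀ k ∉ A, w k = 0) →
      MemLp (fun x => w (rd x)) q volume := by
    intro w hw hws
    obtain ⟨M, hM0, hM⟩ := exists_bound A w hws
    have hmw : Measurable (fun x : EuclideanSpace ℝ (Fin n) => w (rd x)) :=
      (measurable_of_countable w).comp measurable_rd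
    apply memLp_of_bounded_support hmw hSmeas hSvol (M := M)
    intro x
    by_cases hx : rd x ∈ A
    · rw [Set.indicator_of_mem (show x ∈ rd ⁻¹' (A : Set (Fin n → ℤ)) from hx),
        Real.norm_of_nonneg (hw _)]
      exact hM _
    · rw [Set.indicator_of_notMem (show x ∉ rd ⁻¹' (A : Set (Fin n → ℤ)) from hx),
        hws _ hx]
      simp
  have memauxJ : ∀ w : (Fin n → ℤ) → ℝ, (∀ k, 0 ≤ w k) → (∀ k ∉ A, w k = 0) →
      MemLp (fun x => jb x ^ s * w (rd x)) q volume := by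
    intro w hw hws
    obtain ⟨M, hM0, hM⟩ := exists_bound A (fun k => jbZ k ^ s * w k)
      (fun k hk => by show jbZ k ^ s * w k = 0; rw [hws k hk, mul_zero])
    have hjbc : Continuous (fun x : EuclideanSpace ℝ (Fin n) => jb x ^ s) := by
      apply Continuous.rpow_const
      · unfold jb
        apply Continuous.rpow_const (continuous_const.add ((continuous_norm).pow 2))
        intro x
        right; norm_num
      · intro x
        exact Or.inl (jb_pos x).ne'
    have hmw : Measurable (fun x : EuclideanSpace ℝ (Fin n) => jb x ^ s * w (rd x)) :=
      (hjbc.measurable).mul ((measurable_of_countable w).comp measurable_rd)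
    apply memLp_of_bounded_support hmw hSmeas hSvol (M := (Bc n s : ℝ) * M)
    intro x
    by_cases hx : rd x ∈ A
    · rw [Set.indicator_of_mem (show x ∈ rd ⁻¹' (A : Set (Fin n → ℤ)) from hx),
        Real.norm_of_nonneg (mul_nonneg (Real.rpow_nonneg (jb_pos x).le _) (hw _))]
      calc jb x ^ s * w (rd x) ≤ ((Bc n s : ℝ) * jbZ (rd x) ^ s) * w (rd x) :=
            mul_le_mul_of_nonneg_right (jb_rpow_le x) (hw _)
        _ = (Bc n s : ℝ) * (jbZ (rd x) ^ s * w (rd x)) := by ring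
        _ ≤ (Bc n s : ℝ) * M := by
            exact mul_le_mul_of_nonneg_left (hM _) (NNReal.coe_nonneg _)
    · rw [Set.indicator_of_notMem (show x ∉ rd ⁻¹' (A : Set (Fin n → ℤ)) from hx),
        hws _ hx]
      simp
  -- the continuous weighted norms are controlled by the discrete ones
  have upF : eLpNorm (fun x => jb x ^ s * F x) q volume ≤
      (Bc n s) * eLpNorm (fun k => jbZ k ^ s * u k) q Measure.count := by
    apply eLpNorm_le_count (g := fun k => jbZ k ^ s * u k)
    intro x
    rw [Real.norm_of_nonneg (mul_nonneg (Real.rpow_nonneg (jb_pos x).le _) (hu _)),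
      Real.norm_of_nonneg (mul_nonneg (Real.rpow_nonneg (jbZ_pos _).le _) (hu _))]
    calc jb x ^ s * u (rd x) ≤ ((Bc n s : ℝ) * jbZ (rd x) ^ s) * u (rd x) :=
          mul_le_mul_of_nonneg_right (jb_rpow_le x) (hu _)
      _ = (Bc n s : ℝ) * (jbZ (rd x) ^ s * u (rd x)) := by ring
  have upG : eLpNorm (fun x => jb x ^ s * G x) q volume ≤
      (Bc n s) * eLpNorm (fun k => jbZ k ^ s * v k) q Measure.count := by
    apply eLpNorm_le_count (g := fun k => jbZ k ^ s * v k)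
    intro x
    rw [Real.norm_of_nonneg (mul_nonneg (Real.rpow_nonneg (jb_pos x).le _) (hv _)),
      Real.norm_of_nonneg (mul_nonneg (Real.rpow_nonneg (jbZ_pos _).le _) (hv _))]
    calc jb x ^ s * v (rd x) ≤ ((Bc n s : ℝ) * jbZ (rd x) ^ s) * v (rd x) :=
          mul_le_mul_of_nonneg_right (jb_rpow_le x) (hv _)
      _ = (Bc n s : ℝ) * (jbZ (rd x) ^ s * v (rd x)) := by ring
  -- the discrete norm of the convolution is controlled by the continuous one
  have low : eLpNorm (fun k => jbZ k ^ s * (∑ ℓ ∈ A, u ℓ * v (k - ℓ))) q Measure.count ≤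
      (2:ℝ≥0∞)^n * ((Bc n s) * (2:ℝ≥0)^n) *
        eLpNorm (fun x => jb x ^ s * ∫ y, F y * G (x - y)) q volume := by
    apply count_le_eLpNorm hq (c := (Bc n s) * (2:ℝ≥0)^n)
    intro x hx
    obtain ⟨_, ⟨k, rfl⟩, hk⟩ := hx
    have hrdx : rd x = k := rd_eq_of_mem_Qs hk
    have hwnn : 0 ≤ ∑ ℓ ∈ A, u ℓ * v (k - ℓ) :=
      Finset.sum_nonneg fun ℓ _ => mul_nonneg (hu _) (hv _)
    have hInn : 0 ≤ ∫ y, F y * G (x - y) :=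
      integral_nonneg fun y => mul_nonneg (hu _) (hv _)
    have hconv := conv_lower A u v hu hv hsu hsv hk
    have hw2 : ∑ ℓ ∈ A, u ℓ * v (k - ℓ) ≤ (2:ℝ)^n * ∫ y, F y * G (x - y) := by
      have h1 : ((2:ℝ))^n * (((2:ℝ)⁻¹)^n) = 1 := by
        rw [← mul_pow]; norm_num
      calc ∑ ℓ ∈ A, u ℓ * v (k - ℓ)
          = (2:ℝ)^n * ((∑ ℓ ∈ A, u ℓ * v (k - ℓ)) * ((2:ℝ)⁻¹)^n) := by
            rw [← mul_assoc, mul_comm ((2:ℝ)^n), mul_assoc, h1, mul_one]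
        _ ≤ (2:ℝ)^n * ∫ y, F y * G (x - y) :=
            mul_le_mul_of_nonneg_left hconv (by positivity)
    simp only [hrdx]
    rw [Real.norm_of_nonneg (mul_nonneg (Real.rpow_nonneg (jbZ_pos _).le _) hwnn),
      Real.norm_of_nonneg (mul_nonneg (Real.rpow_nonneg (jb_pos x).le _) hInn)]
    have hcoe : ((Bc n s * (2:ℝ≥0)^n : ℝ≥0) : ℝ) = (Bc n s : ℝ) * (2:ℝ)^n := by
      push_cast; ring
    rw [hcoe]
    calc jbZ k ^ s * (∑ ℓ ∈ A, u ℓ * v (k - ℓ))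
        ≤ ((Bc n s : ℝ) * jb x ^ s) * ((2:ℝ)^n * ∫ y, F y * G (x - y)) :=
          mul_le_mul (by rw [← hrdx]; exact jbZ_rpow_le x) hw2 hwnn
            (mul_nonneg (NNReal.coe_nonneg _) (Real.rpow_nonneg (jb_pos x).le _))
      _ = (Bc n s : ℝ) * (2:ℝ)^n * (jb x ^ s * ∫ y, F y * G (x - y)) := by ring
  -- apply the continuous hypothesis
  have happ := hC F G hFmeas hGmeas hFnn hGnn (memaux u hu hsu) (memauxJ u hu hsu)
    (memaux v hv hsv) (memauxJ v hv hsv)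
  calc eLpNorm (fun k => jbZ k ^ s * (∑ ℓ ∈ A, u ℓ * v (k - ℓ))) q Measure.count
      ≤ (2:ℝ≥0∞)^n * ((Bc n s) * (2:ℝ≥0)^n) *
        eLpNorm (fun x => jb x ^ s * ∫ y, F y * G (x - y)) q volume := low
    _ ≤ (2:ℝ≥0∞)^n * ((Bc n s) * (2:ℝ≥0)^n) *
        (C * ((Bc n s) * eLpNorm (fun k => jbZ k ^ s * u k) q Measure.count) *
          ((Bc n s) * eLpNorm (fun k => jbZ k ^ s * v k) q Measure.count)) := by
        apply mul_le_mul_right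
        exact happ.trans (mul_le_mul (mul_le_mul_right upF _) upG (zero_le) (zero_le))
    _ = ((2:ℝ≥0∞)^n * (2:ℝ≥0∞)^n * (Bc n s) * (Bc n s) * (Bc n s) * C) *
        eLpNorm (fun k => jbZ k ^ s * u k) q Measure.count *
        eLpNorm (fun k => jbZ k ^ s * v k) q Measure.count := by
        push_cast
        ring

/-- discrete weight -/
def Jw (s : ℝ) (k : Fin n → ℤ) : ℝ≥0∞ := ENNReal.ofReal (jbZ k ^ s)

/-- the `ℝ≥0∞`-valued weighted norm -/
def Nq (q : ℝ≥0∞) (s : ℝ) (f : (Fin n → ℤ) → ℝ≥0∞) : ℝ≥0∞ :=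
  if q = ∞ then ⨆ k, Jw s k * f k
  else (∑' k, (Jw s k * f k) ^ q.toReal) ^ (1 / q.toReal)

lemma essSup_count_eq (f : (Fin n → ℤ) → ℝ≥0∞) :
    essSup f Measure.count = ⨆ k, f k := by
  apply le_antisymm
  · refine essSup_le_of_ae_le _ ?_
    filter_upwards with k
    exact le_iSup f k
  · apply iSup_le
    intro k
    have h := ENNReal.ae_le_essSup (μ := (Measure.count : Measure (Fin n → ℤ))) f
    rw [Filter.Eventually, mem_ae_iff] at h
    have he := Measure.count_eq_zero_iff.1 h
    by_contra hc
    have hk : k ∈ {y | f y ≤ essSup f Measure.count}ᶜ := hc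
    rw [he] at hk
    exact hk

lemma eLpNorm_count_eq (hq : 1 ≤ q) (r : (Fin n → ℤ) → ℝ) (hr : ∀ k, 0 ≤ r k) :
    eLpNorm (fun k => jbZ k ^ s * r k) q Measure.count
      = Nq q s (fun k => ENNReal.ofReal (r k)) := by
  have hq0 : q ≠ 0 := by
    intro h
    rw [h] at hq
    exact (not_le.2 zero_lt_one) hq
  have hpt : ∀ k, ‖jbZ k ^ s * r k‖ₑ = Jw s k * ENNReal.ofReal (r k) := by
    intro k
    rw [Real.enorm_eq_ofReal (mul_nonneg (Real.rpow_nonneg (jbZ_pos k).le _) (hr k)), Jw,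
      ENNReal.ofReal_mul (Real.rpow_nonneg (jbZ_pos k).le _)]
  by_cases hqt : q = ∞
  · rw [hqt, eLpNorm_exponent_top, Nq, if_pos rfl, eLpNormEssSup, essSup_count_eq]
    exact iSup_congr hpt
  · rw [Nq, if_neg hqt, eLpNorm_eq_lintegral_rpow_enorm_toReal hq0 hqt, lintegral_count]
    congr 1
    apply tsum_congr
    intro k
    rw [hpt]

lemma Nq_mono {f g : (Fin n → ℤ) → ℝ≥0∞} (h : ∀ k, f k ≤ g k) :
    Nq q s f ≤ Nq q s g := by
  unfold Nq
  split
  · exact iSup_mono fun k => mul_le_mul_right (h k) _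
  · apply ENNReal.rpow_le_rpow _ (by positivity)
    exact ENNReal.tsum_le_tsum fun k =>
      ENNReal.rpow_le_rpow (mul_le_mul_right (h k) _) ENNReal.toReal_nonneg

lemma iSup_rpow_mono {x : ℕ → ℝ≥0∞} {r : ℝ} (hr : 0 < r) :
    (⨆ m, x m) ^ r = ⨆ m, (x m) ^ r := by
  apply le_antisymm
  · have h : ⨆ m, x m ≤ (⨆ m, (x m) ^ r) ^ (1/r) := by
      apply iSup_le
      intro m
      calc x m = ((x m) ^ r) ^ (1/r) := by
            rw [← ENNReal.rpow_mul, mul_one_div, div_self hr.ne', ENNReal.rpow_one]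
        _ ≤ (⨆ m, (x m) ^ r) ^ (1/r) := ENNReal.rpow_le_rpow (le_iSup (fun m => (x m) ^ r) m) (by positivity)
    calc (⨆ m, x m) ^ r ≤ ((⨆ m, (x m) ^ r) ^ (1/r)) ^ r := ENNReal.rpow_le_rpow h hr.le
      _ = ⨆ m, (x m) ^ r := by
          rw [← ENNReal.rpow_mul, one_div, inv_mul_cancel₀ hr.ne', ENNReal.rpow_one]
  · exact iSup_le fun m => ENNReal.rpow_le_rpow (le_iSup x m) hr.le

lemma tsum_iSup_mono {f : ℕ → (Fin n → ℤ) → ℝ≥0∞} (hf : ∀ k, Monotone fun m => f m k) :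
    ∑' k, ⨆ m, f m k = ⨆ m, ∑' k, f m k := by
  rw [← lintegral_count]
  rw [lintegral_iSup (fun m => measurable_of_countable _) (fun m m' hmm' k => hf k hmm')]
  exact iSup_congr fun m => lintegral_count _

lemma mul_iSup_mono {a b : ℕ → ℝ≥0∞} (ha : Monotone a) (hb : Monotone b) :
    (⨆ m, a m) * (⨆ m, b m) = ⨆ m, a m * b m := by
  apply le_antisymm
  · rw [ENNReal.iSup_mul]
    apply iSup_le
    intro i
    rw [ENNReal.mul_iSup]
    apply iSup_le
    intro j
    calc a i * b j ≤ a (max i j) * b (max i j) :=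
          mul_le_mul' (ha (le_max_left i j)) (hb (le_max_right i j))
      _ ≤ ⨆ m, a m * b m := le_iSup (fun m => a m * b m) (max i j)
  · exact iSup_le fun m => mul_le_mul' (le_iSup a m) (le_iSup b m)

lemma Nq_iSup (hq : 1 ≤ q) {c : ℕ → (Fin n → ℤ) → ℝ≥0∞} (hm : ∀ k, Monotone fun m => c m k) :
    Nq q s (fun k => ⨆ m, c m k) = ⨆ m, Nq q s (c m) := by
  have hq0 : q ≠ 0 := by
    intro h
    rw [h] at hq
    exact (not_le.2 zero_lt_one) hq
  by_cases hqt : q = ∞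
  · simp only [Nq, if_pos hqt]
    calc ⨆ k, Jw s k * ⨆ m, c m k = ⨆ k, ⨆ m, Jw s k * c m k :=
        iSup_congr fun k => ENNReal.mul_iSup _ _
      _ = ⨆ m, ⨆ k, Jw s k * c m k := iSup_comm
  · simp only [Nq, if_neg hqt]
    have hr : 0 < q.toReal := ENNReal.toReal_pos hq0 hqt
    have h1 : ∀ k, (Jw s k * ⨆ m, c m k) ^ q.toReal = ⨆ m, (Jw s k * c m k) ^ q.toReal := by
      intro k
      rw [ENNReal.mul_iSup, iSup_rpow_mono hr]
    calc (∑' k, (Jw s k * ⨆ m, c m k) ^ q.toReal) ^ (1/q.toReal)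
        = (∑' k, ⨆ m, (Jw s k * c m k) ^ q.toReal) ^ (1/q.toReal) := by
          rw [tsum_congr h1]
      _ = (⨆ m, ∑' k, (Jw s k * c m k) ^ q.toReal) ^ (1/q.toReal) := by
          rw [tsum_iSup_mono]
          intro k m m' hmm'
          exact ENNReal.rpow_le_rpow (mul_le_mul_right (hm k hmm') _) ENNReal.toReal_nonneg
      _ = ⨆ m, (∑' k, (Jw s k * c m k) ^ q.toReal) ^ (1/q.toReal) :=
          iSup_rpow_mono (by positivity)

lemma enorm_tsum_le (c : (Fin n → ℤ) → ℂ) :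
    ENNReal.ofReal ‖∑' ℓ, c ℓ‖ ≤ ∑' ℓ, (‖c ℓ‖₊ : ℝ≥0∞) := by
  by_cases h : Summable (fun ℓ => ‖c ℓ‖)
  · calc ENNReal.ofReal ‖∑' ℓ, c ℓ‖ ≤ ENNReal.ofReal (∑' ℓ, ‖c ℓ‖) :=
        ENNReal.ofReal_le_ofReal (norm_tsum_le_tsum_norm h)
      _ = ∑' ℓ, ENNReal.ofReal ‖c ℓ‖ :=
        ENNReal.ofReal_tsum_of_nonneg (fun _ => norm_nonneg _) h
      _ = ∑' ℓ, (‖c ℓ‖₊ : ℝ≥0∞) := tsum_congr fun ℓ => ofReal_norm _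
  · have hns : ¬ Summable (fun ℓ => ‖c ℓ‖₊) := by
      intro hs
      apply h
      have := NNReal.summable_coe.2 hs
      simpa [coe_nnnorm] using this
    have htop : ∑' ℓ, (‖c ℓ‖₊ : ℝ≥0∞) = ⊤ := by
      by_contra hne
      exact hns (ENNReal.tsum_coe_ne_top_iff_summable.1 hne)
    rw [htop]
    exact le_top

/-- truncation of an `ℝ≥0∞`-valued sequence -/
def trunc (e : ℕ → (Fin n → ℤ)) (f : (Fin n → ℤ) → ℝ≥0∞) (m : ℕ) (k : Fin n → ℤ) : ℝ≥0∞ :=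
  if k ∈ (Finset.range m).image e then min (f k) m else 0

lemma trunc_mono (e : ℕ → (Fin n → ℤ)) (f : (Fin n → ℤ) → ℝ≥0∞) (k : Fin n → ℤ) :
    Monotone fun m => trunc e f m k := by
  intro m m' hmm'
  show trunc e f m k ≤ trunc e f m' k
  unfold trunc
  by_cases h : k ∈ (Finset.range m).image e
  · rw [if_pos h, if_pos (Finset.image_subset_image (Finset.range_subset_range.2 hmm') h)]
    exact min_le_min le_rfl (Nat.cast_le.2 hmm')
  · rw [if_neg h]
    exact zero_le

lemma trunc_le (e : ℕ → (Fin n → ℤ)) (f : (Fin n → ℤ) → ℝ≥0∞) (m : ℕ) (k : Fin n → ℤ) :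
    trunc e f m k ≤ f k := by
  unfold trunc
  split
  · exact min_le_left _ _
  · exact zero_le

lemma trunc_ne_top (e : ℕ → (Fin n → ℤ)) (f : (Fin n → ℤ) → ℝ≥0∞) (m : ℕ) (k : Fin n → ℤ) :
    trunc e f m k ≠ ⊤ := by
  unfold trunc
  split
  · exact ne_top_of_le_ne_top (ENNReal.natCast_ne_top m) (min_le_right _ _)
  · simp

lemma trunc_eq_zero (e : ℕ → (Fin n → ℤ)) (f : (Fin n → ℤ) → ℝ≥0∞) (m : ℕ) {k : Fin n → ℤ}
    (h : k ∉ (Finset.range m).image e) : trunc e f m k = 0 := if_neg h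

lemma iSup_trunc {e : ℕ → (Fin n → ℤ)} (he : Function.Surjective e)
    (f : (Fin n → ℤ) → ℝ≥0∞) (k : Fin n → ℤ) : ⨆ m, trunc e f m k = f k := by
  apply le_antisymm (iSup_le fun m => trunc_le e f m k)
  obtain ⟨m₀, rfl⟩ := he k
  by_cases h : f (e m₀) = ⊤
  · rw [h]
    have hj : ∀ j : ℕ, (j:ℝ≥0∞) ≤ ⨆ m, trunc e f m (e m₀) := by
      intro j
      apply le_iSup_of_le (m₀ + 1 + j)
      have hmem : e m₀ ∈ (Finset.range (m₀ + 1 + j)).image e :=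
        Finset.mem_image.2 ⟨m₀, Finset.mem_range.2 (by omega), rfl⟩
      rw [trunc, if_pos hmem, h, min_eq_right le_top]
      exact Nat.cast_le.2 (by omega)
    calc (⊤:ℝ≥0∞) = ⨆ j : ℕ, (j:ℝ≥0∞) := ENNReal.iSup_natCast.symm
      _ ≤ ⨆ m, trunc e f m (e m₀) := iSup_le hj
  · set m := m₀ + 1 + ⌈(f (e m₀)).toReal⌉₊ with hm
    apply le_iSup_of_le m
    have hmem : e m₀ ∈ (Finset.range m).image e :=
      Finset.mem_image.2 ⟨m₀, Finset.mem_range.2 (by omega), rfl⟩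
    have hle : f (e m₀) ≤ (m:ℝ≥0∞) := by
      calc f (e m₀) = ENNReal.ofReal ((f (e m₀)).toReal) := (ENNReal.ofReal_toReal h).symm
        _ ≤ ENNReal.ofReal ((⌈(f (e m₀)).toReal⌉₊ : ℝ)) :=
            ENNReal.ofReal_le_ofReal (Nat.le_ceil _)
        _ = ((⌈(f (e m₀)).toReal⌉₊ : ℕ) : ℝ≥0∞) := ENNReal.ofReal_natCast _
        _ ≤ (m:ℝ≥0∞) := Nat.cast_le.2 (by omega)
    rw [trunc, if_pos hmem, min_eq_left hle]

/-- the discrete estimate in `ℝ≥0∞` form -/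
lemma discrete_est (hq : 1 ≤ q) (C : ℝ≥0)
    (hC : ∀ F G : EuclideanSpace ℝ (Fin n) → ℝ,
      Measurable F → Measurable G → (∀ x, 0 ≤ F x) → (∀ x, 0 ≤ G x) →
      MemLp F q volume → MemLp (fun x => jb x ^ s * F x) q volume →
      MemLp G q volume → MemLp (fun x => jb x ^ s * G x) q volume →
      eLpNorm (fun x => jb x ^ s * ∫ y, F y * G (x - y)) q volume ≤
        C * eLpNorm (fun x => jb x ^ s * F x) q volume *
          eLpNorm (fun x => jb x ^ s * G x) q volume)
    (f g : (Fin n → ℤ) → ℝ≥0∞) :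
    Nq q s (fun k => ∑' ℓ, f ℓ * g (k - ℓ)) ≤
      ((2:ℝ≥0∞)^n * (2:ℝ≥0∞)^n * (Bc n s) * (Bc n s) * (Bc n s) * C) *
        Nq q s f * Nq q s g := by
  obtain ⟨e, he⟩ := exists_surjective_nat (Fin n → ℤ)
  -- the per-truncation estimate
  have hper : ∀ m, Nq q s (fun k => ∑' ℓ, trunc e f m ℓ * trunc e g m (k - ℓ)) ≤
      ((2:ℝ≥0∞)^n * (2:ℝ≥0∞)^n * (Bc n s) * (Bc n s) * (Bc n s) * C) *
        Nq q s (trunc e f m) * Nq q s (trunc e g m) := by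
    intro m
    set A := (Finset.range m).image e with hA
    set u := fun k => (trunc e f m k).toReal with hu
    set v := fun k => (trunc e g m k).toReal with hv
    have hunn : ∀ k, 0 ≤ u k := fun k => ENNReal.toReal_nonneg
    have hvnn : ∀ k, 0 ≤ v k := fun k => ENNReal.toReal_nonneg
    have huo : ∀ k, ENNReal.ofReal (u k) = trunc e f m k :=
      fun k => ENNReal.ofReal_toReal (trunc_ne_top e f m k)
    have hvo : ∀ k, ENNReal.ofReal (v k) = trunc e g m k :=
      fun k => ENNReal.ofReal_toReal (trunc_ne_top e g m k)
    have husupp : ∀ k ∉ A, u k = 0 := by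
      intro k hk
      rw [hu]
      simp only
      rw [trunc_eq_zero e f m hk, ENNReal.toReal_zero]
    have hvsupp : ∀ k ∉ A, v k = 0 := by
      intro k hk
      rw [hv]
      simp only
      rw [trunc_eq_zero e g m hk, ENNReal.toReal_zero]
    have hwnn : ∀ k, 0 ≤ ∑ ℓ ∈ A, u ℓ * v (k - ℓ) :=
      fun k => Finset.sum_nonneg fun ℓ _ => mul_nonneg (hunn _) (hvnn _)
    have hconv : ∀ k, (∑' ℓ, trunc e f m ℓ * trunc e g m (k - ℓ))
        = ENNReal.ofReal (∑ ℓ ∈ A, u ℓ * v (k - ℓ)) := by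
      intro k
      rw [tsum_eq_sum (s := A) (fun ℓ hℓ => by rw [trunc_eq_zero e f m hℓ, zero_mul])]
      rw [ENNReal.ofReal_sum_of_nonneg (fun ℓ _ => mul_nonneg (hunn _) (hvnn _))]
      apply Finset.sum_congr rfl
      intro ℓ _
      rw [ENNReal.ofReal_mul (hunn _), huo, hvo]
    calc Nq q s (fun k => ∑' ℓ, trunc e f m ℓ * trunc e g m (k - ℓ))
        = Nq q s (fun k => ENNReal.ofReal (∑ ℓ ∈ A, u ℓ * v (k - ℓ))) := by
          exact congrArg _ (funext hconv)
      _ = eLpNorm (fun k => jbZ k ^ s * (∑ ℓ ∈ A, u ℓ * v (k - ℓ))) q Measure.count :=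
          (eLpNorm_count_eq hq _ hwnn).symm
      _ ≤ ((2:ℝ≥0∞)^n * (2:ℝ≥0∞)^n * (Bc n s) * (Bc n s) * (Bc n s) * C) *
            eLpNorm (fun k => jbZ k ^ s * u k) q Measure.count *
            eLpNorm (fun k => jbZ k ^ s * v k) q Measure.count :=
          core hq C hC A u v hunn hvnn husupp hvsupp
      _ = ((2:ℝ≥0∞)^n * (2:ℝ≥0∞)^n * (Bc n s) * (Bc n s) * (Bc n s) * C) *
            Nq q s (trunc e f m) * Nq q s (trunc e g m) := by
          rw [eLpNorm_count_eq hq u hunn, eLpNorm_count_eq hq v hvnn,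
            congrArg (Nq q s) (funext huo), congrArg (Nq q s) (funext hvo)]
  -- pass to the limit
  have hconvm : ∀ k, Monotone fun m => ∑' ℓ, trunc e f m ℓ * trunc e g m (k - ℓ) := by
    intro k m m' hmm'
    exact ENNReal.tsum_le_tsum fun ℓ =>
      mul_le_mul' (trunc_mono e f ℓ hmm') (trunc_mono e g (k - ℓ) hmm')
  have hsup : ∀ k, (∑' ℓ, f ℓ * g (k - ℓ))
      = ⨆ m, ∑' ℓ, trunc e f m ℓ * trunc e g m (k - ℓ) := by
    intro k
    rw [← tsum_iSup_mono (fun ℓ m m' hmm' =>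
      mul_le_mul' (trunc_mono e f ℓ hmm') (trunc_mono e g (k - ℓ) hmm'))]
    apply tsum_congr
    intro ℓ
    rw [← mul_iSup_mono (trunc_mono e f ℓ) (trunc_mono e g (k - ℓ)),
      iSup_trunc he f ℓ, iSup_trunc he g (k - ℓ)]
  calc Nq q s (fun k => ∑' ℓ, f ℓ * g (k - ℓ))
      = Nq q s (fun k => ⨆ m, ∑' ℓ, trunc e f m ℓ * trunc e g m (k - ℓ)) :=
        congrArg _ (funext hsup)
    _ = ⨆ m, Nq q s (fun k => ∑' ℓ, trunc e f m ℓ * trunc e g m (k - ℓ)) :=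
        Nq_iSup hq hconvm
    _ ≤ ((2:ℝ≥0∞)^n * (2:ℝ≥0∞)^n * (Bc n s) * (Bc n s) * (Bc n s) * C) *
        Nq q s f * Nq q s g := by
        apply iSup_le
        intro m
        refine (hper m).trans ?_
        exact mul_le_mul' (mul_le_mul' le_rfl (Nq_mono (trunc_le e f m)))
          (Nq_mono (trunc_le e g m))

end Transfer

open Transfer

/-- **transference from continuous to discrete convolution.** Let
`1 ≤ q ≤ ∞`, `s ∈ ℝ`. If the weighted convolution estimate
`‖⟨·⟩^s (F∗G)‖_{L^q} ≤ C ‖⟨·⟩^s F‖_{L^q} ‖⟨·⟩^s G‖_{L^q}` holds for all nonnegative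
`F, G ∈ L^q` with `⟨·⟩^s F, ⟨·⟩^s G ∈ L^q`, then the discrete analogue holds:
`‖a∗b‖_{ℓ^q_s} ≤ C′ ‖a‖_{ℓ^q_s} ‖b‖_{ℓ^q_s}` for all `a, b ∈ ℓ^q_s(ℤⁿ)`. -/
theorem continuous_to_discrete_convolution_transfer (n : ℕ) (q : ℝ≥0∞) (s : ℝ)
    (hq : 1 ≤ q)
    (h : ∃ C : ℝ≥0, 0 < C ∧ ∀ F G : EuclideanSpace ℝ (Fin n) → ℝ,
      Measurable F → Measurable G → (∀ x, 0 ≤ F x) → (∀ x, 0 ≤ G x) →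
      MemLp F q volume → MemLp (fun x => jb x ^ s * F x) q volume →
      MemLp G q volume → MemLp (fun x => jb x ^ s * G x) q volume →
      eLpNorm (fun x => jb x ^ s * ∫ y, F y * G (x - y)) q volume ≤
        C * eLpNorm (fun x => jb x ^ s * F x) q volume *
          eLpNorm (fun x => jb x ^ s * G x) q volume) :
    ∃ C' : ℝ≥0, 0 < C' ∧ ∀ a b : (Fin n → ℤ) → ℂ,
      lqsNorm q s (fun k => ∑' ℓ, a ℓ * b (k - ℓ)) ≤
        C' * lqsNorm q s a * lqsNorm q s b := by
  obtain ⟨C, hCpos, hC⟩ := h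
  have hBpos : 0 < Bc n s := by
    have h1 := one_le_Bc (n := n) (s := s)
    have : (0:ℝ) < (Bc n s : ℝ) := lt_of_lt_of_le zero_lt_one h1
    exact_mod_cast this
  refine ⟨2^n * 2^n * (Bc n s) * (Bc n s) * (Bc n s) * C, by positivity, ?_⟩
  intro a b
  have hcoe : ((2^n * 2^n * (Bc n s) * (Bc n s) * (Bc n s) * C : ℝ≥0) : ℝ≥0∞)
      = (2:ℝ≥0∞)^n * (2:ℝ≥0∞)^n * (Bc n s) * (Bc n s) * (Bc n s) * C := by
    push_cast
    ring
  have h2 : lqsNorm q s a = Nq q s (fun k => (‖a k‖₊ : ℝ≥0∞)) := by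
    rw [lqsNorm, eLpNorm_count_eq hq _ (fun k => norm_nonneg _)]
    exact congrArg _ (funext fun k => ofReal_norm _)
  have h3 : lqsNorm q s b = Nq q s (fun k => (‖b k‖₊ : ℝ≥0∞)) := by
    rw [lqsNorm, eLpNorm_count_eq hq _ (fun k => norm_nonneg _)]
    exact congrArg _ (funext fun k => ofReal_norm _)
  calc lqsNorm q s (fun k => ∑' ℓ, a ℓ * b (k - ℓ))
      = Nq q s (fun k => ENNReal.ofReal ‖∑' ℓ, a ℓ * b (k - ℓ)‖) := by
        rw [lqsNorm]
        exact eLpNorm_count_eq hq _ (fun k => norm_nonneg _)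
    _ ≤ Nq q s (fun k => ∑' ℓ, (‖a ℓ‖₊ : ℝ≥0∞) * (‖b (k - ℓ)‖₊ : ℝ≥0∞)) := by
        apply Nq_mono
        intro k
        refine (enorm_tsum_le (fun ℓ => a ℓ * b (k - ℓ))).trans_eq ?_
        apply tsum_congr
        intro ℓ
        rw [nnnorm_mul, ENNReal.coe_mul]
    _ ≤ ((2:ℝ≥0∞)^n * (2:ℝ≥0∞)^n * (Bc n s) * (Bc n s) * (Bc n s) * C) *
        Nq q s (fun k => (‖a k‖₊ : ℝ≥0∞)) * Nq q s (fun k => (‖b k‖₊ : ℝ≥0∞)) :=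
        discrete_est hq C hC _ _
    _ = ((2^n * 2^n * (Bc n s) * (Bc n s) * (Bc n s) * C : ℝ≥0) : ℝ≥0∞) *
        lqsNorm q s a * lqsNorm q s b := by
        rw [hcoe, h2, h3]
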